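/- There exists θ₀ ∈ (π/2, π) such that for every θ ∈ (π/2, θ₀) there is a constant c > 0, independent of τ and z, with the property: for every time step τ > 0 and every z ∈ D(τ,θ) one has |(ρ₂(e^{−zτ})/2) τ³ − z^{−3}| ≤ c τ³, where ρ₂(ξ) = ξ(1+ξ)/(1−ξ)³. -/

import Mathlib

open Complex Set

/-- The region `D(τ,θ)`: nonzero `z` with either `|arg z| = θ` and `|Im z| ≤ π/τ`,
or `|z| ≤ 1/τ` and `|arg z| ≤ θ`. -/
def Dset (τ θ : ℝ) : Set ℂ :=
  {z : ℂ | z ≠ 0 ∧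
    ((|z.arg| = θ ∧ |z.im| ≤ Real.pi / τ) ∨ (‖z‖ ≤ 1 / τ ∧ |z.arg| ≤ θ))}

/-- Closed form of the generating function `Σ_{n≥1} n² ξⁿ`. -/
noncomputable def rho2 (ξ : ℂ) : ℂ := ξ * (1 + ξ) / (1 - ξ) ^ 3

set_option maxHeartbeats 1000000 in
lemma near_zero (w : ℂ) (hw0 : w ≠ 0) (hw : ‖w‖ ≤ 1/3) :
    ‖rho2 (Complex.exp (-w)) / 2 - (w^3)⁻¹‖ ≤ 4 := by
  set a := ‖w‖ with ha_def
  have ha0 : 0 < a := by rw [ha_def]; exact (norm_pos_iff.mpr hw0)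
  have ha3 : a ≤ 1/3 := hw
  have hx1 : ‖-w‖ ≤ 1 := by rw [norm_neg]; linarith
  have h2 := Complex.exp_bound hx1 (n := 2) (by norm_num)
  have h4 := Complex.exp_bound hx1 (n := 4) (by norm_num)
  simp [Finset.sum_range_succ, Nat.factorial] at h2 h4
  norm_num at h2 h4
  set u := 1 - Complex.exp (-w) with hu_def
  set p := w - w^2/2 + w^3/6 with hp_def
  set s := u - p with hs_def
  have hu : u = p + s := by rw [hs_def]; ring
  have hs_bound : ‖s‖ ≤ 5/96 * a^4 := by
    have h : s = -(Complex.exp (-w) - (1 + -w + w^2/2 + (-w)^3/6)) := by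
      rw [hs_def, hu_def, hp_def]; ring
    rw [h, norm_neg]
    calc ‖Complex.exp (-w) - (1 + -w + w^2/2 + (-w)^3/6)‖
        ≤ a^4 * (5 * 96⁻¹) := by convert h4 using 2 <;> norm_num
      _ = 5/96 * a^4 := by ring
  have hp_bound : ‖p‖ ≤ 3/2 * a := by
    rw [hp_def]
    calc ‖w - w^2/2 + w^3/6‖
        ≤ ‖w - w^2/2‖ + ‖w^3/6‖ := norm_add_le _ _
      _ ≤ ‖w‖ + ‖w^2/2‖ + ‖w^3/6‖ := by
          have := norm_sub_le w (w^2/2); linarith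
      _ ≤ a + a^2/2 + a^3/6 := by
          simp [norm_div, norm_pow, ← ha_def]
      _ ≤ 3/2 * a := by nlinarith
  have hu_lb : 3/4 * a ≤ ‖u‖ := by
    have h1 : ‖u - w‖ ≤ 3/4 * a^2 := by
      have h : u - w = -(Complex.exp (-w) - (1 + -w)) := by rw [hu_def]; ring
      rw [h, norm_neg]
      calc ‖Complex.exp (-w) - (1 + -w)‖ ≤ a^2 * (3/4) := h2
        _ = 3/4 * a^2 := by ring
    have h3 : a - ‖u - w‖ ≤ ‖u‖ := by
      have := norm_sub_norm_le w u
      rw [← norm_neg (w - u), neg_sub] at this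
      linarith
    nlinarith
  have hu0 : u ≠ 0 := by
    intro h
    rw [h] at hu_lb
    simp at hu_lb
    nlinarith
  have hexp : Complex.exp (-w) = 1 - u := by rw [hu_def]; ring
  have hone : (1 : ℂ) - (1 - u) = u := by ring
  have hF : rho2 (Complex.exp (-w)) / 2 - (w^3)⁻¹
      = ((1-u)*(2-u)*w^3 - 2*u^3) / (2*u^3*w^3) := by
    rw [rho2, hexp, hone]; field_simp; ring
  -- power facts
  have hpow : ∀ k : ℕ, 7 ≤ k → a^k ≤ a^6 :=
    fun k hk => pow_le_pow_of_le_one ha0.le (by linarith) (by linarith)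
  have habsN : ‖(1-u)*(2-u)*w^3 - 2*u^3‖ ≤ 3 * a^6 := by
    have hN_eq : (1-u)*(2-u)*w^3 - 2*u^3
        = w^6 * (-(1/4 : ℂ) + w/6 - w^2/12 + w^3/54)
          + (w^3*(-(3*s) + 2*p*s + s^2) - 2*(3*p^2*s + 3*p*s^2 + s^3)) := by
      rw [hu, hp_def]; ring
    rw [hN_eq]
    set b := ‖s‖ with hb_def
    set q := ‖p‖ with hq_def
    have hb0 : 0 ≤ b := norm_nonneg _
    have hq0 : 0 ≤ q := norm_nonneg _
    have t1 : ‖w^6 * (-(1/4 : ℂ) + w/6 - w^2/12 + w^3/54)‖ ≤ a^6 * (1/3) := by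
      rw [norm_mul, norm_pow, ← ha_def]
      have hsm : ‖-(1/4 : ℂ) + w/6 - w^2/12 + w^3/54‖ ≤ 1/3 := by
        calc ‖-(1/4 : ℂ) + w/6 - w^2/12 + w^3/54‖
            ≤ ‖-(1/4 : ℂ) + w/6 - w^2/12‖ + ‖w^3/54‖ :=
              norm_add_le _ _
          _ ≤ ‖-(1/4 : ℂ) + w/6‖ + ‖w^2/12‖ + ‖w^3/54‖ := by
              have := norm_sub_le (-(1/4 : ℂ) + w/6) (w^2/12); linarith
          _ ≤ ‖-(1/4 : ℂ)‖ + ‖w/6‖ + ‖w^2/12‖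
                + ‖w^3/54‖ := by
              have := norm_add_le (-(1/4 : ℂ)) (w/6); linarith
          _ ≤ 1/4 + a/6 + a^2/12 + a^3/54 := by
              simp [norm_div, norm_pow, ← ha_def]
          _ ≤ 1/3 := by nlinarith
      exact mul_le_mul_of_nonneg_left hsm (by positivity)
    have t2 : ‖w^3*(-(3*s) + 2*p*s + s^2)‖ ≤ a^3 * (3*b + 2*q*b + b^2) := by
      rw [norm_mul, norm_pow, ← ha_def]
      have hsm : ‖-(3*s) + 2*p*s + s^2‖ ≤ 3*b + 2*q*b + b^2 := by
        calc ‖-(3*s) + 2*p*s + s^2‖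
            ≤ ‖-(3*s) + 2*p*s‖ + ‖s^2‖ := norm_add_le _ _
          _ ≤ ‖-(3*s)‖ + ‖2*p*s‖ + ‖s^2‖ := by
              have := norm_add_le (-(3*s)) (2*p*s); linarith
          _ ≤ 3*b + 2*q*b + b^2 := by
              simp [norm_mul, norm_pow, ← hb_def, ← hq_def, norm_neg]
      exact mul_le_mul_of_nonneg_left hsm (by positivity)
    have t3 : ‖2*(3*p^2*s + 3*p*s^2 + s^3)‖ ≤ 2*(3*q^2*b + 3*q*b^2 + b^3) := by
      rw [norm_mul]
      have hsm : ‖3*p^2*s + 3*p*s^2 + s^3‖ ≤ 3*q^2*b + 3*q*b^2 + b^3 := by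
        calc ‖3*p^2*s + 3*p*s^2 + s^3‖
            ≤ ‖3*p^2*s + 3*p*s^2‖ + ‖s^3‖ := norm_add_le _ _
          _ ≤ ‖3*p^2*s‖ + ‖3*p*s^2‖ + ‖s^3‖ := by
              have := norm_add_le (3*p^2*s) (3*p*s^2); linarith
          _ ≤ 3*q^2*b + 3*q*b^2 + b^3 := by
              simp [norm_mul, norm_pow, ← hb_def, ← hq_def]
      have h2' : ‖(2:ℂ)‖ = 2 := by norm_num
      rw [h2']
      linarith
    have tri : ‖w^6 * (-(1/4 : ℂ) + w/6 - w^2/12 + w^3/54)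
            + (w^3*(-(3*s) + 2*p*s + s^2) - 2*(3*p^2*s + 3*p*s^2 + s^3))‖
        ≤ ‖w^6 * (-(1/4 : ℂ) + w/6 - w^2/12 + w^3/54)‖
          + ‖w^3*(-(3*s) + 2*p*s + s^2)‖
          + ‖2*(3*p^2*s + 3*p*s^2 + s^3)‖ := by
      have h1 := norm_add_le (w^6 * (-(1/4 : ℂ) + w/6 - w^2/12 + w^3/54))
        (w^3*(-(3*s) + 2*p*s + s^2) - 2*(3*p^2*s + 3*p*s^2 + s^3))
      have h2'' := norm_sub_le (w^3*(-(3*s) + 2*p*s + s^2))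
        (2*(3*p^2*s + 3*p*s^2 + s^3))
      linarith
    -- substitute the bounds on b and q
    have e1 : q*b ≤ (3/2*a)*(5/96*a^4) :=
      mul_le_mul hp_bound hs_bound hb0 (by positivity)
    have e2 : b^2 ≤ (5/96*a^4)^2 := pow_le_pow_left₀ hb0 hs_bound 2
    have e3 : q^2 ≤ (3/2*a)^2 := pow_le_pow_left₀ hq0 hp_bound 2
    have e4 : b^3 ≤ (5/96*a^4)^3 := pow_le_pow_left₀ hb0 hs_bound 3
    have e5 : q^2*b ≤ (3/2*a)^2*(5/96*a^4) :=
      mul_le_mul e3 hs_bound hb0 (by positivity)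
    have e6 : q*b^2 ≤ (3/2*a)*(5/96*a^4)^2 :=
      mul_le_mul hp_bound e2 (by positivity) (by positivity)
    have main2 : a^3 * (3*b + 2*q*b + b^2)
        ≤ a^3 * (3*(5/96*a^4) + 2*(3/2*a)*(5/96*a^4) + (5/96*a^4)^2) :=
      mul_le_mul_of_nonneg_left (by linarith) (by positivity)
    have main3 : 2*(3*q^2*b + 3*q*b^2 + b^3)
        ≤ 2*(3*(3/2*a)^2*(5/96*a^4) + 3*(3/2*a)*(5/96*a^4)^2 + (5/96*a^4)^3) := by
      linarith
    have p7 := hpow 7 (by norm_num)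
    have p8 := hpow 8 (by norm_num)
    have p9 := hpow 9 (by norm_num)
    have p11 := hpow 11 (by norm_num)
    have p12 := hpow 12 (by norm_num)
    have expand2 : a^3 * (3*(5/96*a^4) + 2*(3/2*a)*(5/96*a^4) + (5/96*a^4)^2)
        = 15/96*a^7 + 15/96*a^8 + 25/9216*a^11 := by ring
    have expand3 : 2*(3*(3/2*a)^2*(5/96*a^4) + 3*(3/2*a)*(5/96*a^4)^2 + (5/96*a^4)^3)
        = 270/384*a^6 + 225/9216*a^9 + 250/884736*a^12 := by ring
    rw [expand2] at main2
    rw [expand3] at main3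
    have h6 : (0:ℝ) ≤ a^6 := by positivity
    linarith
  rw [hF, norm_div]
  have hden_eq : ‖2*u^3*w^3‖ = 2 * (‖u‖)^3 * a^3 := by
    simp [norm_mul, norm_pow, ← ha_def]
  have hden_lb : 27/32 * a^6 ≤ ‖2*u^3*w^3‖ := by
    rw [hden_eq]
    calc (27/32 : ℝ) * a^6 = 2 * (3/4*a)^3 * a^3 := by ring
      _ ≤ 2 * (‖u‖)^3 * a^3 := by gcongr <;> positivity
  have hpos : (0:ℝ) < 27/32 * a^6 := by positivity
  calc ‖(1-u)*(2-u)*w^3 - 2*u^3‖ / ‖2*u^3*w^3‖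
      ≤ (3*a^6) / (27/32 * a^6) := div_le_div₀ (by positivity) habsN hpos hden_lb
    _ ≤ 4 := by
        rw [div_le_iff₀ hpos]
        nlinarith [pow_nonneg ha0.le 6]

lemma sin_big {θ : ℝ} (hθ1 : Real.pi/2 < θ) (hθ2 : θ < 5*Real.pi/6) : 1/2 < Real.sin θ := by
  have h : Real.sin θ = Real.sin (Real.pi - θ) := (Real.sin_pi_sub θ).symm
  rw [h, ← Real.sin_pi_div_six]
  apply Real.sin_lt_sin_of_lt_of_le_pi_div_two (by linarith [Real.pi_pos]) (by linarith) (by linarith)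

lemma compact_bound {θ : ℝ} (hθ1 : Real.pi/2 < θ) (hθ2 : θ < 5*Real.pi/6) :
    ∃ C : ℝ, ∀ w ∈ (fun pr : ℝ × ℝ => (pr.1 : ℂ) * Complex.exp (pr.2 * Complex.I)) ''
      (Icc (1/3) (Real.pi / Real.sin θ) ×ˢ Icc (-θ) θ),
      ‖rho2 (Complex.exp (-w)) / 2 - (w^3)⁻¹‖ ≤ C := by
  have hsin : 1/2 < Real.sin θ := sin_big hθ1 hθ2
  set S := (fun pr : ℝ × ℝ => (pr.1 : ℂ) * Complex.exp (pr.2 * Complex.I)) ''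
      (Icc (1/3) (Real.pi / Real.sin θ) ×ˢ Icc (-θ) θ) with hS_def
  -- basic facts about members of S
  have habs : ∀ w ∈ S, 1/3 ≤ ‖w‖ ∧ ‖w‖ ≤ Real.pi / Real.sin θ := by
    rintro w ⟨⟨r, t⟩, ⟨⟨hr1, hr2⟩, _⟩, rfl⟩
    have : ‖(r : ℂ) * Complex.exp (t * Complex.I)‖ = |r| := by
      simp [norm_mul, Complex.norm_exp]
    rw [this, _root_.abs_of_nonneg (by linarith : (0:ℝ) ≤ r)]
    exact ⟨hr1, hr2⟩
  have hR : Real.pi / Real.sin θ < 2 * Real.pi := by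
    rw [div_lt_iff₀ (by linarith)]
    nlinarith [Real.pi_pos]
  have hne0 : ∀ w ∈ S, w ≠ 0 := by
    intro w hw h0
    have := (habs w hw).1
    rw [h0] at this
    simp at this
    linarith
  have hne1 : ∀ w ∈ S, (1 : ℂ) - Complex.exp (-w) ≠ 0 := by
    intro w hw h0
    have hexp1 : Complex.exp (-w) = 1 := by
      have := sub_eq_zero.mp h0
      exact this.symm
    obtain ⟨n, hn⟩ := Complex.exp_eq_one_iff.mp hexp1
    have habsw : ‖w‖ = |(n : ℝ)| * (2 * Real.pi) := by
      rw [← norm_neg, hn]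
      simp [norm_mul, Complex.norm_I, _root_.abs_of_pos Real.pi_pos]
    have hn0 : n ≠ 0 := by
      intro h
      apply hne0 w hw
      have : -w = 0 := by rw [hn, h]; simp
      simpa [neg_eq_zero] using this
    have h1n : (1:ℝ) ≤ |(n:ℝ)| := by
      rw [← Int.cast_abs]
      exact_mod_cast Int.one_le_abs hn0
    have h2 := (habs w hw).2
    rw [habsw] at h2
    nlinarith [Real.pi_pos]
  -- compactness
  have hScomp : IsCompact S := by
    apply (isCompact_Icc.prod isCompact_Icc).image
    exact (Complex.continuous_ofReal.comp continuous_fst).mul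
      (Complex.continuous_exp.comp ((Complex.continuous_ofReal.comp continuous_snd).mul
        continuous_const))
  -- continuity
  have hcont : ContinuousOn (fun w : ℂ => rho2 (Complex.exp (-w)) / 2 - (w^3)⁻¹) S := by
    simp only [rho2]
    apply ContinuousOn.sub
    · apply ContinuousOn.div_const
      apply ContinuousOn.div
      · exact Continuous.continuousOn ((Complex.continuous_exp.comp continuous_neg).mul
          (continuous_const.add (Complex.continuous_exp.comp continuous_neg)))
      · exact Continuous.continuousOn
          (((continuous_const.sub (Complex.continuous_exp.comp continuous_neg)).pow 3))
      · intro w hw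
        exact pow_ne_zero 3 (hne1 w hw)
    · apply ContinuousOn.inv₀
      · exact (continuous_pow 3).continuousOn
      · intro w hw
        exact pow_ne_zero 3 (hne0 w hw)
  obtain ⟨C, hC⟩ := hScomp.exists_bound_of_continuousOn hcont
  exact ⟨C, fun w hw => by simpa using hC w hw⟩

theorem rho2_consistency :
    ∃ θ₀ ∈ Ioo (Real.pi / 2) Real.pi, ∀ θ ∈ Ioo (Real.pi / 2) θ₀,
      ∃ c > (0 : ℝ),
        ∀ τ : ℝ, 0 < τ → ∀ z ∈ Dset τ θ,
          ‖(rho2 (Complex.exp (-z * τ)) / 2) * (τ : ℂ) ^ 3 - z ^ (-3 : ℂ)‖ ≤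
            c * τ ^ 3 := by
  have hpi := Real.pi_pos
  refine ⟨5 * Real.pi / 6, ⟨by linarith, by linarith⟩, ?_⟩
  rintro θ ⟨hθ1, hθ2⟩
  have hsin : 1/2 < Real.sin θ := sin_big hθ1 hθ2
  have hsin1 : Real.sin θ ≤ 1 := Real.sin_le_one θ
  obtain ⟨C, hC⟩ := compact_bound hθ1 hθ2
  refine ⟨max C 4, lt_of_lt_of_le (by norm_num) (le_max_right C 4), ?_⟩
  intro τ hτ z hz
  obtain ⟨hz0, hcase⟩ := hz
  have hτ0 : (τ : ℂ) ≠ 0 := by exact_mod_cast hτ.ne'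
  set w := z * (τ : ℂ) with hw_def
  have hw0 : w ≠ 0 := mul_ne_zero hz0 hτ0
  -- rewrite the quantity
  have hcpow : z ^ (-3 : ℂ) = (z^3)⁻¹ := by
    rw [show (-3 : ℂ) = ((-3 : ℤ) : ℂ) by norm_num, Complex.cpow_intCast]
    simp
  have harg : -z * (τ : ℂ) = -w := by rw [hw_def]; ring
  have key : rho2 (Complex.exp (-z * τ)) / 2 * (τ : ℂ)^3 - z ^ (-3 : ℂ)
      = (rho2 (Complex.exp (-w)) / 2 - (w^3)⁻¹) * (τ : ℂ)^3 := by
    rw [hcpow, harg, hw_def]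
    field_simp
  rw [key, norm_mul, norm_pow, Complex.norm_real, Real.norm_eq_abs, _root_.abs_of_pos hτ]
  have hbound : ‖rho2 (Complex.exp (-w)) / 2 - (w^3)⁻¹‖ ≤ max C 4 := by
    rcases le_or_gt (‖w‖) (1/3) with hle | hlt
    · exact (near_zero w hw0 hle).trans (le_max_right C 4)
    · -- w is in the compact region
      have hargw : w.arg = z.arg := by
        rw [hw_def, mul_comm]
        exact Complex.arg_real_mul z hτ
      have habsw : ‖w‖ = ‖z‖ * τ := by
        rw [hw_def, norm_mul, Complex.norm_real, Real.norm_eq_abs, _root_.abs_of_pos hτ]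
      have hwS : w ∈ (fun pr : ℝ × ℝ => (pr.1 : ℂ) * Complex.exp (pr.2 * Complex.I)) ''
          (Icc (1/3) (Real.pi / Real.sin θ) ×ˢ Icc (-θ) θ) := by
        refine ⟨(‖w‖, w.arg), ⟨⟨hlt.le, ?_⟩, ?_⟩, Complex.norm_mul_exp_arg_mul_I w⟩
        · -- |w| ≤ π / sin θ
          rcases hcase with ⟨h1, h2⟩ | ⟨h1, h2⟩
          · -- ray case
            have him : w.im = z.im * τ := by
              rw [hw_def]
              simp [Complex.mul_im]
            have himb : |w.im| ≤ Real.pi := by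
              rw [him, abs_mul, _root_.abs_of_pos hτ]
              calc |z.im| * τ ≤ (Real.pi / τ) * τ := by
                    exact mul_le_mul_of_nonneg_right h2 hτ.le
                _ = Real.pi := by field_simp
            have hsinarg : Real.sin w.arg = w.im / ‖w‖ := Complex.sin_arg w
            have habssin : |Real.sin w.arg| = Real.sin θ := by
              rw [hargw]
              rcases abs_eq (by linarith : (0:ℝ) ≤ θ) |>.mp h1 with h | h
              · rw [h, _root_.abs_of_pos (by linarith : 0 < Real.sin θ)]
              · rw [h, Real.sin_neg, abs_neg, _root_.abs_of_pos (by linarith : 0 < Real.sin θ)]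
            have : ‖w‖ * Real.sin θ ≤ Real.pi := by
              have hwim : w.im = ‖w‖ * Real.sin w.arg := by
                rw [hsinarg]
                field_simp
              have h3 : |w.im| = ‖w‖ * Real.sin θ := by
                rw [hwim, abs_mul, _root_.abs_of_pos (show 0 < ‖w‖ by positivity),
                  habssin]
              rw [← h3]; exact himb
            rw [← le_div_iff₀ (by linarith : 0 < Real.sin θ)] at this
            exact this
          · -- disk case
            have : ‖w‖ ≤ 1 := by
              rw [habsw]
              calc ‖z‖ * τ ≤ (1/τ) * τ := mul_le_mul_of_nonneg_right h1 hτ.le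
                _ = 1 := by field_simp
            have hR : (1:ℝ) ≤ Real.pi / Real.sin θ := by
              rw [le_div_iff₀ (by linarith : 0 < Real.sin θ)]
              nlinarith [Real.pi_gt_three]
            linarith
        · -- arg bounds
          have : |w.arg| ≤ θ := by
            rw [hargw]
            rcases hcase with ⟨h1, _⟩ | ⟨_, h1⟩
            · exact h1.le
            · exact h1
          exact abs_le.mp this
      exact (hC w hwS).trans (le_max_left C 4)
  calc ‖rho2 (Complex.exp (-w)) / 2 - (w^3)⁻¹‖ * τ^3
      ≤ max C 4 * τ^3 := by
        apply mul_le_mul_of_nonneg_right hbound (by positivity)
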